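/- Let (m_n), (λ_n), (c_n), (d_n), (ε_n) be real sequences such that m_n → +∞ and λ_n → +∞, the sequences (c_n) and (d_n) are bounded, m_n + c_n > 0 for all n, ε_n ∈ [0, 8π) for all n with ε_n → 0, and suppose there is a constant C ∈ ℝ such that for all n: 2π·(m_n + λ_n + d_n)²/(m_n + c_n) - (8π - ε_n)·λ_n ≤ C. Then λ_n/m_n → 1 as n → ∞. -/
import Mathlib


open Filter
open scoped Real Topology

/-- if `m_n → +∞`, `λ_n → +∞`, `(c_n)` and `(d_n)` are bounded,
`m_n + c_n > 0`, `ε_n ∈ [0, 8π)` with `ε_n → 0`, and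
`2π (m_n + λ_n + d_n)²/(m_n + c_n) - (8π - ε_n) λ_n ≤ C` for all `n`,
then `λ_n / m_n → 1`. -/
theorem neck_forces_lambda_eq_m (m lam c d ε : ℕ → ℝ)
    (hm : Tendsto m atTop atTop) (hlam : Tendsto lam atTop atTop)
    (hc : ∃ B : ℝ, ∀ n, |c n| ≤ B) (hd : ∃ B : ℝ, ∀ n, |d n| ≤ B)
    (hmc : ∀ n, 0 < m n + c n)
    (hε : ∀ n, ε n ∈ Set.Ico (0 : ℝ) (8 * π))
    (hε0 : Tendsto ε atTop (𝓝 0))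
    (C : ℝ)
    (hC : ∀ n, 2 * π * (m n + lam n + d n) ^ 2 / (m n + c n) - (8 * π - ε n) * lam n ≤ C) :
    Tendsto (fun n => lam n / m n) atTop (𝓝 1) := by
  obtain ⟨Bc, hBc⟩ := hc
  obtain ⟨Bd, hBd⟩ := hd
  have hπ : (0:ℝ) < π := Real.pi_pos
  have hBc0 : 0 ≤ Bc := le_trans (abs_nonneg _) (hBc 0)
  have hBd0 : 0 ≤ Bd := le_trans (abs_nonneg _) (hBd 0)
  set K : ℝ := (|C| + 4*π*(Bc+Bd) + 1) / (2*π) with hKdef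
  have hK0 : 0 < K := by positivity
  set a : ℕ → ℝ := fun n => m n + c n with hadef
  have haT : Tendsto a atTop atTop := by
    have h := tendsto_atTop_add_const_right atTop (-Bc) hm
    refine tendsto_atTop_mono (fun n => ?_) h
    have := (abs_le.mp (hBc n)).1
    show m n + -Bc ≤ m n + c n
    linarith
  have hl0 : ∀ᶠ n in atTop, 0 ≤ lam n := hlam.eventually_ge_atTop 0
  -- key quadratic inequality
  have key : ∀ᶠ n in atTop, (a n - lam n)^2 ≤ K * (a n + lam n) := by
    filter_upwards [hl0, haT.eventually_ge_atTop 1] with n hl ha1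
    have han : a n = m n + c n := rfl
    have hap : (0:ℝ) < a n := lt_of_lt_of_le one_pos ha1
    have hap' : (0:ℝ) < m n + c n := han ▸ hap
    have h1 : 2*π*(m n + lam n + d n)^2 ≤ (C + (8*π - ε n)*lam n) * (m n + c n) := by
      have hdiv : 2*π*(m n + lam n + d n)^2 / (m n + c n) ≤ C + (8*π - ε n)*lam n := by
        linarith [hC n]
      calc 2*π*(m n + lam n + d n)^2
          = (2*π*(m n + lam n + d n)^2 / (m n + c n)) * (m n + c n) := by
            rw [div_mul_cancel₀ _ hap'.ne']
        _ ≤ (C + (8*π - ε n)*lam n) * (m n + c n) :=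
            mul_le_mul_of_nonneg_right hdiv hap'.le
    have hεn := (hε n).1
    have hc1 := (abs_le.mp (hBc n)).1
    have hc2 := (abs_le.mp (hBc n)).2
    have hd1 := (abs_le.mp (hBd n)).1
    have hd2 := (abs_le.mp (hBd n)).2
    have hCle : C ≤ |C| := le_abs_self C
    have h2 : 2*π*((m n + c n) - lam n)^2 ≤ (|C| + 4*π*(Bc+Bd) + 1) * ((m n + c n) + lam n) := by
      nlinarith [mul_nonneg (mul_nonneg hεn hl) hap'.le,
        mul_nonneg hπ.le (sq_nonneg (d n - c n)),
        mul_nonneg (mul_nonneg (by linarith : (0:ℝ) ≤ 4*π)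
          (by linarith : (0:ℝ) ≤ (Bc+Bd) + (d n - c n)))
          (by linarith : (0:ℝ) ≤ (m n + c n) + lam n),
        mul_nonneg (abs_nonneg C) hl,
        mul_nonneg (sub_nonneg.mpr hCle) hap'.le]
    rw [han, hKdef, div_mul_eq_mul_div, le_div_iff₀ (by linarith : (0:ℝ) < 2*π)]
    linarith [h2]
  -- bound (lam/a - 1)^2
  have hbig : ∀ᶠ n in atTop, (lam n / a n - 1)^2 ≤ 4*K / a n := by
    filter_upwards [key, hl0, haT.eventually_ge_atTop (max K 1)] with n hk hl haK
    have ha1 : (1:ℝ) ≤ a n := le_trans (le_max_right _ _) haK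
    have hap : (0:ℝ) < a n := lt_of_lt_of_le one_pos ha1
    have hKa : K ≤ a n := le_trans (le_max_left _ _) haK
    have hlam2 : lam n * lam n ≤ 3 * a n * lam n := by
      nlinarith [hk, mul_le_mul_of_nonneg_right hKa (by linarith : (0:ℝ) ≤ a n + lam n)]
    have hu3 : lam n ≤ 3 * a n := by
      rcases eq_or_lt_of_le hl with h | h
      · linarith
      · exact le_of_mul_le_mul_right hlam2 h
    have h4 : (a n - lam n)^2 ≤ 4*K*(a n) := by nlinarith [hk]
    have heq : (lam n / a n - 1)^2 = (a n - lam n)^2 / (a n)^2 := by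
      field_simp
      ring
    rw [heq, div_le_div_iff₀ (by positivity) hap]
    nlinarith [mul_le_mul_of_nonneg_right h4 hap.le]
  have hto : Tendsto (fun n => (lam n / a n - 1)^2) atTop (𝓝 0) := by
    have h0 : Tendsto (fun n => 4*K / a n) atTop (𝓝 0) :=
      Tendsto.div_atTop tendsto_const_nhds haT
    exact squeeze_zero' (Eventually.of_forall fun n => sq_nonneg _) hbig h0
  have habs : Tendsto (fun n => lam n / a n - 1) atTop (𝓝 0) := by
    rw [tendsto_zero_iff_abs_tendsto_zero]
    have h := (Real.continuous_sqrt.tendsto 0).comp hto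
    simp only [Function.comp_def, Real.sqrt_sq_eq_abs, Real.sqrt_zero] at h
    exact h
  have h1' : Tendsto (fun n => lam n / a n) atTop (𝓝 1) := by
    have := habs.add (tendsto_const_nhds : Tendsto (fun _ : ℕ => (1:ℝ)) atTop (𝓝 1))
    simpa using this
  have hc0 : Tendsto (fun n => c n / m n) atTop (𝓝 0) := by
    apply squeeze_zero_norm' ?_ (Tendsto.div_atTop (tendsto_const_nhds (x := Bc)) hm)
    filter_upwards [hm.eventually_gt_atTop 0] with n hmp
    rw [Real.norm_eq_abs, abs_div, abs_of_pos hmp]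
    gcongr
    exact hBc n
  have h2' : Tendsto (fun n => a n / m n) atTop (𝓝 1) := by
    have h : Tendsto (fun n => 1 + c n / m n) atTop (𝓝 1) := by
      simpa using (tendsto_const_nhds (x := (1:ℝ))).add hc0
    refine h.congr' ?_
    filter_upwards [hm.eventually_gt_atTop 0] with n hmp
    show 1 + c n / m n = a n / m n
    rw [hadef]
    field_simp
  have := h1'.mul h2'
  rw [mul_one] at this
  refine this.congr' ?_
  filter_upwards [haT.eventually_gt_atTop 0] with n hap
  show lam n / a n * (a n / m n) = lam n / m n
  rw [div_mul_div_comm, mul_comm (lam n) (a n), mul_div_mul_left _ _ hap.ne']
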